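/- There exists a PPT measurement achieving success probability exactly 7/8 on the four states ψ₀⊗ψ₀, ψ₁⊗ψ₃, ψ₂⊗ψ₃, ψ₃⊗ψ₃. Explicitly, with Q = (1/4)·I⊗(ψ₁+ψ₂), R = (7/8)ψ₀+(1/8)ψ₃, S = (1/8)ψ₀+(7/8)ψ₃, the operators P₁ = Q + ((2/3)ψ₀+(1/3)I)⊗R, P₂ = Q + ((1/3)ψ₀+ψ₁)⊗S + (1/3)(ψ₂+ψ₃)⊗R, P₃ = Q + ((1/3)ψ₀+ψ₂)⊗S + (1/3)(ψ₁+ψ₃)⊗R, P₄ = Q + ((1/3)ψ₀+ψ₃)⊗S + (1/3)(ψ₁+ψ₂)⊗R satisfy: each Pⱼ is PPT, P₁+P₂+P₃+P₄ = I₁₆, and ⟨Pⱼ, ρⱼ⟩ = 7/8 for each j. -/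

import Mathlib

open Matrix

noncomputable def pauli : Fin 4 → Matrix (Fin 2) (Fin 2) ℂ
  | 0 => 1
  | 1 => !![0, 1; 1, 0]
  | 2 => !![0, -Complex.I; Complex.I, 0]
  | 3 => !![1, 0; 0, -1]

/-- Density operator of the Bell state `|ψᵢ⟩ = (1 ⊗ σᵢ)|ψ₀⟩`,
`|ψ₀⟩ = (|00⟩+|11⟩)/√2`, as a matrix on `ℂ² ⊗ ℂ²`. -/
noncomputable def bell (i : Fin 4) :
    Matrix (Fin 2 × Fin 2) (Fin 2 × Fin 2) ℂ :=
  fun p q => (1 / 2 : ℂ) * pauli i p.2 p.1 * (starRingEnd ℂ) (pauli i q.2 q.1)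

/-- Partial transpose on the first tensor factor. -/
def PT {d : ℕ} (X : Matrix (Fin d × Fin d) (Fin d × Fin d) ℂ) :
    Matrix (Fin d × Fin d) (Fin d × Fin d) ℂ :=
  fun p q => X (q.1, p.2) (p.1, q.2)

open Kronecker
open scoped ComplexOrder

/-- Partial transpose on both of Alice's qubits, acting factorwise on
`(ℂ²⊗ℂ²) ⊗ (ℂ²⊗ℂ²)`. -/
def PT2 (X : Matrix ((Fin 2 × Fin 2) × (Fin 2 × Fin 2))
    ((Fin 2 × Fin 2) × (Fin 2 × Fin 2)) ℂ) :
    Matrix ((Fin 2 × Fin 2) × (Fin 2 × Fin 2)) ((Fin 2 × Fin 2) × (Fin 2 × Fin 2)) ℂ :=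
  fun p q => X ((q.1.1, p.1.2), (q.2.1, p.2.2)) ((p.1.1, q.1.2), (p.2.1, q.2.2))

/-- The four states of Yu–Duan–Ying's example. -/
noncomputable def ydy : Fin 4 → Matrix ((Fin 2 × Fin 2) × (Fin 2 × Fin 2))
    ((Fin 2 × Fin 2) × (Fin 2 × Fin 2)) ℂ
  | 0 => bell 0 ⊗ₖ bell 0
  | 1 => bell 1 ⊗ₖ bell 3
  | 2 => bell 2 ⊗ₖ bell 3
  | 3 => bell 3 ⊗ₖ bell 3

noncomputable def Qop : Matrix ((Fin 2 × Fin 2) × (Fin 2 × Fin 2))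
    ((Fin 2 × Fin 2) × (Fin 2 × Fin 2)) ℂ :=
  (1 / 4 : ℂ) • ((1 : Matrix (Fin 2 × Fin 2) (Fin 2 × Fin 2) ℂ) ⊗ₖ (bell 1 + bell 2))

noncomputable def Rop : Matrix (Fin 2 × Fin 2) (Fin 2 × Fin 2) ℂ :=
  (7 / 8 : ℂ) • bell 0 + (1 / 8 : ℂ) • bell 3

noncomputable def Sop : Matrix (Fin 2 × Fin 2) (Fin 2 × Fin 2) ℂ :=
  (1 / 8 : ℂ) • bell 0 + (7 / 8 : ℂ) • bell 3

noncomputable def Pop : Fin 4 → Matrix ((Fin 2 × Fin 2) × (Fin 2 × Fin 2))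
    ((Fin 2 × Fin 2) × (Fin 2 × Fin 2)) ℂ
  | 0 => Qop + ((2 / 3 : ℂ) • bell 0 + (1 / 3 : ℂ) • 1) ⊗ₖ Rop
  | 1 => Qop + ((1 / 3 : ℂ) • bell 0 + bell 1) ⊗ₖ Sop
        + (1 / 3 : ℂ) • ((bell 2 + bell 3) ⊗ₖ Rop)
  | 2 => Qop + ((1 / 3 : ℂ) • bell 0 + bell 2) ⊗ₖ Sop
        + (1 / 3 : ℂ) • ((bell 1 + bell 3) ⊗ₖ Rop)
  | 3 => Qop + ((1 / 3 : ℂ) • bell 0 + bell 3) ⊗ₖ Sop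
        + (1 / 3 : ℂ) • ((bell 1 + bell 2) ⊗ₖ Rop)

-- Auxiliary lemmas
lemma psd_smul {n : Type*} [Fintype n] {M : Matrix n n ℂ} (h : M.PosSemidef) (c : ℝ)
    (hc : 0 ≤ c) : (((c : ℂ)) • M).PosSemidef := by
  constructor
  · unfold Matrix.IsHermitian
    rw [conjTranspose_smul, h.1]
    simp
  · exact (h.smul (a := (c : ℂ)) (by exact_mod_cast hc)).2

lemma kron_conjTranspose {m n : Type*} (A : Matrix m m ℂ) (B : Matrix n n ℂ) :
    (A ⊗ₖ B)ᴴ = Aᴴ ⊗ₖ Bᴴ := by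
  ext p q
  simp [conjTranspose_apply, mul_comm]

lemma psd_kron {m n : Type*} [Fintype m] [Fintype n] [DecidableEq m] [DecidableEq n]
    {A : Matrix m m ℂ} {B : Matrix n n ℂ}
    (hA : A.PosSemidef) (hB : B.PosSemidef) : (A ⊗ₖ B).PosSemidef := by
  exact hA.kronecker hB

lemma bell_psd (i : Fin 4) : (bell i).PosSemidef := by
  have h : bell i = (((1/2 : ℝ)) : ℂ) •
      ((Matrix.of (fun (_ : Fin 1) q => (starRingEnd ℂ) (pauli i q.2 q.1)))ᴴ *
       (Matrix.of (fun (_ : Fin 1) q => (starRingEnd ℂ) (pauli i q.2 q.1)))) := by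
    ext p q
    simp [bell, Matrix.mul_apply, Fin.sum_univ_succ, mul_comm, mul_assoc, mul_left_comm]
  rw [h]
  exact psd_smul (Matrix.posSemidef_conjTranspose_mul_self _) _ (by norm_num)

lemma one_eq : (1 : Matrix (Fin 2 × Fin 2) (Fin 2 × Fin 2) ℂ)
    = bell 0 + bell 1 + bell 2 + bell 3 := by
  ext ⟨a,b⟩ ⟨c,d⟩
  fin_cases a <;> fin_cases b <;> fin_cases c <;> fin_cases d <;>
    simp [bell, pauli, Matrix.one_apply, Prod.ext_iff] <;> ring_nf <;> norm_num [Complex.I_sq]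

lemma pt_bell0 : PT (bell 0) = (1/2 : ℂ) • bell 0 + (1/2 : ℂ) • bell 1
    + (-(1/2) : ℂ) • bell 2 + (1/2 : ℂ) • bell 3 := by
  ext ⟨a,b⟩ ⟨c,d⟩
  fin_cases a <;> fin_cases b <;> fin_cases c <;> fin_cases d <;>
    simp [PT, bell, pauli, Matrix.one_apply] <;> ring_nf <;> norm_num [Complex.I_sq]

lemma pt_bell1 : PT (bell 1) = (1/2 : ℂ) • bell 0 + (1/2 : ℂ) • bell 1
    + (1/2 : ℂ) • bell 2 + (-(1/2) : ℂ) • bell 3 := by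
  ext ⟨a,b⟩ ⟨c,d⟩
  fin_cases a <;> fin_cases b <;> fin_cases c <;> fin_cases d <;>
    simp [PT, bell, pauli, Matrix.one_apply] <;> ring_nf <;> norm_num [Complex.I_sq]

lemma pt_bell2 : PT (bell 2) = (-(1/2) : ℂ) • bell 0 + (1/2 : ℂ) • bell 1
    + (1/2 : ℂ) • bell 2 + (1/2 : ℂ) • bell 3 := by
  ext ⟨a,b⟩ ⟨c,d⟩
  fin_cases a <;> fin_cases b <;> fin_cases c <;> fin_cases d <;>
    simp [PT, bell, pauli, Matrix.one_apply] <;> ring_nf <;> norm_num [Complex.I_sq]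

lemma pt_bell3 : PT (bell 3) = (1/2 : ℂ) • bell 0 + (-(1/2) : ℂ) • bell 1
    + (1/2 : ℂ) • bell 2 + (1/2 : ℂ) • bell 3 := by
  ext ⟨a,b⟩ ⟨c,d⟩
  fin_cases a <;> fin_cases b <;> fin_cases c <;> fin_cases d <;>
    simp [PT, bell, pauli, Matrix.one_apply] <;> ring_nf <;> norm_num [Complex.I_sq]

lemma pt2_add (X Y) : PT2 (X + Y) = PT2 X + PT2 Y := rfl
lemma pt2_smul (c : ℂ) (X) : PT2 (c • X) = c • PT2 X := rfl
lemma pt2_kron (A B : Matrix (Fin 2 × Fin 2) (Fin 2 × Fin 2) ℂ) :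
    PT2 (A ⊗ₖ B) = PT A ⊗ₖ PT B := rfl

noncomputable def bb (i k : Fin 4) := bell i ⊗ₖ bell k

lemma trace_bell_mul (i k : Fin 4) :
    Matrix.trace (bell i * bell k) = if i = k then 1 else 0 := by
  fin_cases i <;> fin_cases k <;>
    simp [Matrix.trace, Matrix.mul_apply, bell, pauli, Fintype.sum_prod_type,
      Fin.sum_univ_succ, Matrix.one_apply] <;> ring_nf <;> norm_num [Complex.I_sq]
-- generated decompositions
lemma pop0_eq : Pop 0 =
      ((7/8:ℝ):ℂ) • bb 0 0
    + ((1/4:ℝ):ℂ) • bb 0 1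
    + ((1/4:ℝ):ℂ) • bb 0 2
    + ((1/8:ℝ):ℂ) • bb 0 3
    + ((7/24:ℝ):ℂ) • bb 1 0
    + ((1/4:ℝ):ℂ) • bb 1 1
    + ((1/4:ℝ):ℂ) • bb 1 2
    + ((1/24:ℝ):ℂ) • bb 1 3
    + ((7/24:ℝ):ℂ) • bb 2 0
    + ((1/4:ℝ):ℂ) • bb 2 1
    + ((1/4:ℝ):ℂ) • bb 2 2
    + ((1/24:ℝ):ℂ) • bb 2 3
    + ((7/24:ℝ):ℂ) • bb 3 0
    + ((1/4:ℝ):ℂ) • bb 3 1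
    + ((1/4:ℝ):ℂ) • bb 3 2
    + ((1/24:ℝ):ℂ) • bb 3 3 := by
  simp only [Pop, Qop, Rop, Sop, bb, one_eq, Matrix.add_kronecker, Matrix.kronecker_add,
    Matrix.smul_kronecker, Matrix.kronecker_smul, smul_add, smul_smul]
  push_cast
  module

lemma pop1_eq : Pop 1 =
      ((1/24:ℝ):ℂ) • bb 0 0
    + ((1/4:ℝ):ℂ) • bb 0 1
    + ((1/4:ℝ):ℂ) • bb 0 2
    + ((7/24:ℝ):ℂ) • bb 0 3
    + ((1/8:ℝ):ℂ) • bb 1 0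
    + ((1/4:ℝ):ℂ) • bb 1 1
    + ((1/4:ℝ):ℂ) • bb 1 2
    + ((7/8:ℝ):ℂ) • bb 1 3
    + ((7/24:ℝ):ℂ) • bb 2 0
    + ((1/4:ℝ):ℂ) • bb 2 1
    + ((1/4:ℝ):ℂ) • bb 2 2
    + ((1/24:ℝ):ℂ) • bb 2 3
    + ((7/24:ℝ):ℂ) • bb 3 0
    + ((1/4:ℝ):ℂ) • bb 3 1
    + ((1/4:ℝ):ℂ) • bb 3 2
    + ((1/24:ℝ):ℂ) • bb 3 3 := by
  simp only [Pop, Qop, Rop, Sop, bb, one_eq, Matrix.add_kronecker, Matrix.kronecker_add,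
    Matrix.smul_kronecker, Matrix.kronecker_smul, smul_add, smul_smul]
  push_cast
  module

lemma pop2_eq : Pop 2 =
      ((1/24:ℝ):ℂ) • bb 0 0
    + ((1/4:ℝ):ℂ) • bb 0 1
    + ((1/4:ℝ):ℂ) • bb 0 2
    + ((7/24:ℝ):ℂ) • bb 0 3
    + ((7/24:ℝ):ℂ) • bb 1 0
    + ((1/4:ℝ):ℂ) • bb 1 1
    + ((1/4:ℝ):ℂ) • bb 1 2
    + ((1/24:ℝ):ℂ) • bb 1 3
    + ((1/8:ℝ):ℂ) • bb 2 0
    + ((1/4:ℝ):ℂ) • bb 2 1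
    + ((1/4:ℝ):ℂ) • bb 2 2
    + ((7/8:ℝ):ℂ) • bb 2 3
    + ((7/24:ℝ):ℂ) • bb 3 0
    + ((1/4:ℝ):ℂ) • bb 3 1
    + ((1/4:ℝ):ℂ) • bb 3 2
    + ((1/24:ℝ):ℂ) • bb 3 3 := by
  simp only [Pop, Qop, Rop, Sop, bb, one_eq, Matrix.add_kronecker, Matrix.kronecker_add,
    Matrix.smul_kronecker, Matrix.kronecker_smul, smul_add, smul_smul]
  push_cast
  module

lemma pop3_eq : Pop 3 =
      ((1/24:ℝ):ℂ) • bb 0 0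
    + ((1/4:ℝ):ℂ) • bb 0 1
    + ((1/4:ℝ):ℂ) • bb 0 2
    + ((7/24:ℝ):ℂ) • bb 0 3
    + ((7/24:ℝ):ℂ) • bb 1 0
    + ((1/4:ℝ):ℂ) • bb 1 1
    + ((1/4:ℝ):ℂ) • bb 1 2
    + ((1/24:ℝ):ℂ) • bb 1 3
    + ((7/24:ℝ):ℂ) • bb 2 0
    + ((1/4:ℝ):ℂ) • bb 2 1
    + ((1/4:ℝ):ℂ) • bb 2 2
    + ((1/24:ℝ):ℂ) • bb 2 3
    + ((1/8:ℝ):ℂ) • bb 3 0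
    + ((1/4:ℝ):ℂ) • bb 3 1
    + ((1/4:ℝ):ℂ) • bb 3 2
    + ((7/8:ℝ):ℂ) • bb 3 3 := by
  simp only [Pop, Qop, Rop, Sop, bb, one_eq, Matrix.add_kronecker, Matrix.kronecker_add,
    Matrix.smul_kronecker, Matrix.kronecker_smul, smul_add, smul_smul]
  push_cast
  module

lemma pt2_pop0_eq : PT2 (Pop 0) =
      ((1/3:ℝ):ℂ) • bb 0 0
    + ((1/2:ℝ):ℂ) • bb 0 1
    + ((1/3:ℝ):ℂ) • bb 0 3
    + ((1/3:ℝ):ℂ) • bb 1 0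
    + ((1/2:ℝ):ℂ) • bb 1 1
    + ((1/3:ℝ):ℂ) • bb 1 3
    + ((1/4:ℝ):ℂ) • bb 2 1
    + ((1/4:ℝ):ℂ) • bb 2 2
    + ((1/3:ℝ):ℂ) • bb 3 0
    + ((1/2:ℝ):ℂ) • bb 3 1
    + ((1/3:ℝ):ℂ) • bb 3 3 := by
  rw [pop0_eq]
  simp only [pt2_add, pt2_smul, bb, pt2_kron, pt_bell0, pt_bell1, pt_bell2, pt_bell3,
    Matrix.add_kronecker, Matrix.kronecker_add, Matrix.smul_kronecker, Matrix.kronecker_smul,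
    smul_add, smul_smul]
  push_cast
  module

lemma pt2_pop1_eq : PT2 (Pop 1) =
      ((1/3:ℝ):ℂ) • bb 0 0
    + ((1/2:ℝ):ℂ) • bb 0 2
    + ((1/3:ℝ):ℂ) • bb 0 3
    + ((1/3:ℝ):ℂ) • bb 1 0
    + ((1/2:ℝ):ℂ) • bb 1 2
    + ((1/3:ℝ):ℂ) • bb 1 3
    + ((1/3:ℝ):ℂ) • bb 2 0
    + ((1/4:ℝ):ℂ) • bb 2 1
    + ((1/4:ℝ):ℂ) • bb 2 2
    + ((1/3:ℝ):ℂ) • bb 2 3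
    + ((1/2:ℝ):ℂ) • bb 3 1 := by
  rw [pop1_eq]
  simp only [pt2_add, pt2_smul, bb, pt2_kron, pt_bell0, pt_bell1, pt_bell2, pt_bell3,
    Matrix.add_kronecker, Matrix.kronecker_add, Matrix.smul_kronecker, Matrix.kronecker_smul,
    smul_add, smul_smul]
  push_cast
  module

lemma pt2_pop2_eq : PT2 (Pop 2) =
      ((1/2:ℝ):ℂ) • bb 0 1
    + ((1/3:ℝ):ℂ) • bb 1 0
    + ((1/2:ℝ):ℂ) • bb 1 2
    + ((1/3:ℝ):ℂ) • bb 1 3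
    + ((1/3:ℝ):ℂ) • bb 2 0
    + ((1/4:ℝ):ℂ) • bb 2 1
    + ((1/4:ℝ):ℂ) • bb 2 2
    + ((1/3:ℝ):ℂ) • bb 2 3
    + ((1/3:ℝ):ℂ) • bb 3 0
    + ((1/2:ℝ):ℂ) • bb 3 2
    + ((1/3:ℝ):ℂ) • bb 3 3 := by
  rw [pop2_eq]
  simp only [pt2_add, pt2_smul, bb, pt2_kron, pt_bell0, pt_bell1, pt_bell2, pt_bell3,
    Matrix.add_kronecker, Matrix.kronecker_add, Matrix.smul_kronecker, Matrix.kronecker_smul,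
    smul_add, smul_smul]
  push_cast
  module

lemma pt2_pop3_eq : PT2 (Pop 3) =
      ((1/3:ℝ):ℂ) • bb 0 0
    + ((1/2:ℝ):ℂ) • bb 0 2
    + ((1/3:ℝ):ℂ) • bb 0 3
    + ((1/2:ℝ):ℂ) • bb 1 1
    + ((1/3:ℝ):ℂ) • bb 2 0
    + ((1/4:ℝ):ℂ) • bb 2 1
    + ((1/4:ℝ):ℂ) • bb 2 2
    + ((1/3:ℝ):ℂ) • bb 2 3
    + ((1/3:ℝ):ℂ) • bb 3 0
    + ((1/2:ℝ):ℂ) • bb 3 2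
    + ((1/3:ℝ):ℂ) • bb 3 3 := by
  rw [pop3_eq]
  simp only [pt2_add, pt2_smul, bb, pt2_kron, pt_bell0, pt_bell1, pt_bell2, pt_bell3,
    Matrix.add_kronecker, Matrix.kronecker_add, Matrix.smul_kronecker, Matrix.kronecker_smul,
    smul_add, smul_smul]
  push_cast
  module

lemma pop0_psd : (Pop 0).PosSemidef := by
  rw [pop0_eq]
  exact ((((((((((((((((psd_smul (psd_kron (bell_psd 0) (bell_psd 0)) (7/8) (by norm_num)).add
    (psd_smul (psd_kron (bell_psd 0) (bell_psd 1)) (1/4) (by norm_num))).add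
    (psd_smul (psd_kron (bell_psd 0) (bell_psd 2)) (1/4) (by norm_num))).add
    (psd_smul (psd_kron (bell_psd 0) (bell_psd 3)) (1/8) (by norm_num))).add
    (psd_smul (psd_kron (bell_psd 1) (bell_psd 0)) (7/24) (by norm_num))).add
    (psd_smul (psd_kron (bell_psd 1) (bell_psd 1)) (1/4) (by norm_num))).add
    (psd_smul (psd_kron (bell_psd 1) (bell_psd 2)) (1/4) (by norm_num))).add
    (psd_smul (psd_kron (bell_psd 1) (bell_psd 3)) (1/24) (by norm_num))).add
    (psd_smul (psd_kron (bell_psd 2) (bell_psd 0)) (7/24) (by norm_num))).add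
    (psd_smul (psd_kron (bell_psd 2) (bell_psd 1)) (1/4) (by norm_num))).add
    (psd_smul (psd_kron (bell_psd 2) (bell_psd 2)) (1/4) (by norm_num))).add
    (psd_smul (psd_kron (bell_psd 2) (bell_psd 3)) (1/24) (by norm_num))).add
    (psd_smul (psd_kron (bell_psd 3) (bell_psd 0)) (7/24) (by norm_num))).add
    (psd_smul (psd_kron (bell_psd 3) (bell_psd 1)) (1/4) (by norm_num))).add
    (psd_smul (psd_kron (bell_psd 3) (bell_psd 2)) (1/4) (by norm_num))).add
    (psd_smul (psd_kron (bell_psd 3) (bell_psd 3)) (1/24) (by norm_num)))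

lemma pt2_pop0_psd : (PT2 (Pop 0)).PosSemidef := by
  rw [pt2_pop0_eq]
  exact (((((((((((psd_smul (psd_kron (bell_psd 0) (bell_psd 0)) (1/3) (by norm_num)).add
    (psd_smul (psd_kron (bell_psd 0) (bell_psd 1)) (1/2) (by norm_num))).add
    (psd_smul (psd_kron (bell_psd 0) (bell_psd 3)) (1/3) (by norm_num))).add
    (psd_smul (psd_kron (bell_psd 1) (bell_psd 0)) (1/3) (by norm_num))).add
    (psd_smul (psd_kron (bell_psd 1) (bell_psd 1)) (1/2) (by norm_num))).add
    (psd_smul (psd_kron (bell_psd 1) (bell_psd 3)) (1/3) (by norm_num))).add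
    (psd_smul (psd_kron (bell_psd 2) (bell_psd 1)) (1/4) (by norm_num))).add
    (psd_smul (psd_kron (bell_psd 2) (bell_psd 2)) (1/4) (by norm_num))).add
    (psd_smul (psd_kron (bell_psd 3) (bell_psd 0)) (1/3) (by norm_num))).add
    (psd_smul (psd_kron (bell_psd 3) (bell_psd 1)) (1/2) (by norm_num))).add
    (psd_smul (psd_kron (bell_psd 3) (bell_psd 3)) (1/3) (by norm_num)))

lemma pop1_psd : (Pop 1).PosSemidef := by
  rw [pop1_eq]
  exact ((((((((((((((((psd_smul (psd_kron (bell_psd 0) (bell_psd 0)) (1/24) (by norm_num)).add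
    (psd_smul (psd_kron (bell_psd 0) (bell_psd 1)) (1/4) (by norm_num))).add
    (psd_smul (psd_kron (bell_psd 0) (bell_psd 2)) (1/4) (by norm_num))).add
    (psd_smul (psd_kron (bell_psd 0) (bell_psd 3)) (7/24) (by norm_num))).add
    (psd_smul (psd_kron (bell_psd 1) (bell_psd 0)) (1/8) (by norm_num))).add
    (psd_smul (psd_kron (bell_psd 1) (bell_psd 1)) (1/4) (by norm_num))).add
    (psd_smul (psd_kron (bell_psd 1) (bell_psd 2)) (1/4) (by norm_num))).add
    (psd_smul (psd_kron (bell_psd 1) (bell_psd 3)) (7/8) (by norm_num))).add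
    (psd_smul (psd_kron (bell_psd 2) (bell_psd 0)) (7/24) (by norm_num))).add
    (psd_smul (psd_kron (bell_psd 2) (bell_psd 1)) (1/4) (by norm_num))).add
    (psd_smul (psd_kron (bell_psd 2) (bell_psd 2)) (1/4) (by norm_num))).add
    (psd_smul (psd_kron (bell_psd 2) (bell_psd 3)) (1/24) (by norm_num))).add
    (psd_smul (psd_kron (bell_psd 3) (bell_psd 0)) (7/24) (by norm_num))).add
    (psd_smul (psd_kron (bell_psd 3) (bell_psd 1)) (1/4) (by norm_num))).add
    (psd_smul (psd_kron (bell_psd 3) (bell_psd 2)) (1/4) (by norm_num))).add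
    (psd_smul (psd_kron (bell_psd 3) (bell_psd 3)) (1/24) (by norm_num)))

lemma pt2_pop1_psd : (PT2 (Pop 1)).PosSemidef := by
  rw [pt2_pop1_eq]
  exact (((((((((((psd_smul (psd_kron (bell_psd 0) (bell_psd 0)) (1/3) (by norm_num)).add
    (psd_smul (psd_kron (bell_psd 0) (bell_psd 2)) (1/2) (by norm_num))).add
    (psd_smul (psd_kron (bell_psd 0) (bell_psd 3)) (1/3) (by norm_num))).add
    (psd_smul (psd_kron (bell_psd 1) (bell_psd 0)) (1/3) (by norm_num))).add
    (psd_smul (psd_kron (bell_psd 1) (bell_psd 2)) (1/2) (by norm_num))).add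
    (psd_smul (psd_kron (bell_psd 1) (bell_psd 3)) (1/3) (by norm_num))).add
    (psd_smul (psd_kron (bell_psd 2) (bell_psd 0)) (1/3) (by norm_num))).add
    (psd_smul (psd_kron (bell_psd 2) (bell_psd 1)) (1/4) (by norm_num))).add
    (psd_smul (psd_kron (bell_psd 2) (bell_psd 2)) (1/4) (by norm_num))).add
    (psd_smul (psd_kron (bell_psd 2) (bell_psd 3)) (1/3) (by norm_num))).add
    (psd_smul (psd_kron (bell_psd 3) (bell_psd 1)) (1/2) (by norm_num)))

lemma pop2_psd : (Pop 2).PosSemidef := by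
  rw [pop2_eq]
  exact ((((((((((((((((psd_smul (psd_kron (bell_psd 0) (bell_psd 0)) (1/24) (by norm_num)).add
    (psd_smul (psd_kron (bell_psd 0) (bell_psd 1)) (1/4) (by norm_num))).add
    (psd_smul (psd_kron (bell_psd 0) (bell_psd 2)) (1/4) (by norm_num))).add
    (psd_smul (psd_kron (bell_psd 0) (bell_psd 3)) (7/24) (by norm_num))).add
    (psd_smul (psd_kron (bell_psd 1) (bell_psd 0)) (7/24) (by norm_num))).add
    (psd_smul (psd_kron (bell_psd 1) (bell_psd 1)) (1/4) (by norm_num))).add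
    (psd_smul (psd_kron (bell_psd 1) (bell_psd 2)) (1/4) (by norm_num))).add
    (psd_smul (psd_kron (bell_psd 1) (bell_psd 3)) (1/24) (by norm_num))).add
    (psd_smul (psd_kron (bell_psd 2) (bell_psd 0)) (1/8) (by norm_num))).add
    (psd_smul (psd_kron (bell_psd 2) (bell_psd 1)) (1/4) (by norm_num))).add
    (psd_smul (psd_kron (bell_psd 2) (bell_psd 2)) (1/4) (by norm_num))).add
    (psd_smul (psd_kron (bell_psd 2) (bell_psd 3)) (7/8) (by norm_num))).add
    (psd_smul (psd_kron (bell_psd 3) (bell_psd 0)) (7/24) (by norm_num))).add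
    (psd_smul (psd_kron (bell_psd 3) (bell_psd 1)) (1/4) (by norm_num))).add
    (psd_smul (psd_kron (bell_psd 3) (bell_psd 2)) (1/4) (by norm_num))).add
    (psd_smul (psd_kron (bell_psd 3) (bell_psd 3)) (1/24) (by norm_num)))

lemma pt2_pop2_psd : (PT2 (Pop 2)).PosSemidef := by
  rw [pt2_pop2_eq]
  exact (((((((((((psd_smul (psd_kron (bell_psd 0) (bell_psd 1)) (1/2) (by norm_num)).add
    (psd_smul (psd_kron (bell_psd 1) (bell_psd 0)) (1/3) (by norm_num))).add
    (psd_smul (psd_kron (bell_psd 1) (bell_psd 2)) (1/2) (by norm_num))).add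
    (psd_smul (psd_kron (bell_psd 1) (bell_psd 3)) (1/3) (by norm_num))).add
    (psd_smul (psd_kron (bell_psd 2) (bell_psd 0)) (1/3) (by norm_num))).add
    (psd_smul (psd_kron (bell_psd 2) (bell_psd 1)) (1/4) (by norm_num))).add
    (psd_smul (psd_kron (bell_psd 2) (bell_psd 2)) (1/4) (by norm_num))).add
    (psd_smul (psd_kron (bell_psd 2) (bell_psd 3)) (1/3) (by norm_num))).add
    (psd_smul (psd_kron (bell_psd 3) (bell_psd 0)) (1/3) (by norm_num))).add
    (psd_smul (psd_kron (bell_psd 3) (bell_psd 2)) (1/2) (by norm_num))).add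
    (psd_smul (psd_kron (bell_psd 3) (bell_psd 3)) (1/3) (by norm_num)))

lemma pop3_psd : (Pop 3).PosSemidef := by
  rw [pop3_eq]
  exact ((((((((((((((((psd_smul (psd_kron (bell_psd 0) (bell_psd 0)) (1/24) (by norm_num)).add
    (psd_smul (psd_kron (bell_psd 0) (bell_psd 1)) (1/4) (by norm_num))).add
    (psd_smul (psd_kron (bell_psd 0) (bell_psd 2)) (1/4) (by norm_num))).add
    (psd_smul (psd_kron (bell_psd 0) (bell_psd 3)) (7/24) (by norm_num))).add
    (psd_smul (psd_kron (bell_psd 1) (bell_psd 0)) (7/24) (by norm_num))).add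
    (psd_smul (psd_kron (bell_psd 1) (bell_psd 1)) (1/4) (by norm_num))).add
    (psd_smul (psd_kron (bell_psd 1) (bell_psd 2)) (1/4) (by norm_num))).add
    (psd_smul (psd_kron (bell_psd 1) (bell_psd 3)) (1/24) (by norm_num))).add
    (psd_smul (psd_kron (bell_psd 2) (bell_psd 0)) (7/24) (by norm_num))).add
    (psd_smul (psd_kron (bell_psd 2) (bell_psd 1)) (1/4) (by norm_num))).add
    (psd_smul (psd_kron (bell_psd 2) (bell_psd 2)) (1/4) (by norm_num))).add
    (psd_smul (psd_kron (bell_psd 2) (bell_psd 3)) (1/24) (by norm_num))).add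
    (psd_smul (psd_kron (bell_psd 3) (bell_psd 0)) (1/8) (by norm_num))).add
    (psd_smul (psd_kron (bell_psd 3) (bell_psd 1)) (1/4) (by norm_num))).add
    (psd_smul (psd_kron (bell_psd 3) (bell_psd 2)) (1/4) (by norm_num))).add
    (psd_smul (psd_kron (bell_psd 3) (bell_psd 3)) (7/8) (by norm_num)))

lemma pt2_pop3_psd : (PT2 (Pop 3)).PosSemidef := by
  rw [pt2_pop3_eq]
  exact (((((((((((psd_smul (psd_kron (bell_psd 0) (bell_psd 0)) (1/3) (by norm_num)).add
    (psd_smul (psd_kron (bell_psd 0) (bell_psd 2)) (1/2) (by norm_num))).add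
    (psd_smul (psd_kron (bell_psd 0) (bell_psd 3)) (1/3) (by norm_num))).add
    (psd_smul (psd_kron (bell_psd 1) (bell_psd 1)) (1/2) (by norm_num))).add
    (psd_smul (psd_kron (bell_psd 2) (bell_psd 0)) (1/3) (by norm_num))).add
    (psd_smul (psd_kron (bell_psd 2) (bell_psd 1)) (1/4) (by norm_num))).add
    (psd_smul (psd_kron (bell_psd 2) (bell_psd 2)) (1/4) (by norm_num))).add
    (psd_smul (psd_kron (bell_psd 2) (bell_psd 3)) (1/3) (by norm_num))).add
    (psd_smul (psd_kron (bell_psd 3) (bell_psd 0)) (1/3) (by norm_num))).add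
    (psd_smul (psd_kron (bell_psd 3) (bell_psd 2)) (1/2) (by norm_num))).add
    (psd_smul (psd_kron (bell_psd 3) (bell_psd 3)) (1/3) (by norm_num)))

/-- The explicit operators `P₁,…,P₄` form a PPT measurement that distinguishes
the Yu–Duan–Ying states with success probability exactly `7/8`. -/
theorem ydy_optimal_ppt_measurement :
    (∀ j : Fin 4, (Pop j).PosSemidef) ∧
    (∀ j : Fin 4, (PT2 (Pop j)).PosSemidef) ∧
    (∑ j, Pop j = 1) ∧
    (∀ j : Fin 4, Matrix.trace ((Pop j)ᴴ * ydy j) = 7 / 8) := by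
  have hpsd : ∀ j : Fin 4, (Pop j).PosSemidef := by
    intro j; fin_cases j
    exacts [pop0_psd, pop1_psd, pop2_psd, pop3_psd]
  refine ⟨hpsd, ?_, ?_, ?_⟩
  · intro j; fin_cases j
    exacts [pt2_pop0_psd, pt2_pop1_psd, pt2_pop2_psd, pt2_pop3_psd]
  · rw [Fin.sum_univ_four, pop0_eq, pop1_eq, pop2_eq, pop3_eq]
    have h1 : (1 : Matrix ((Fin 2 × Fin 2) × (Fin 2 × Fin 2))
        ((Fin 2 × Fin 2) × (Fin 2 × Fin 2)) ℂ)
        = (bell 0 + bell 1 + bell 2 + bell 3) ⊗ₖ (bell 0 + bell 1 + bell 2 + bell 3) := by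
      rw [← one_eq, Matrix.one_kronecker_one]
    rw [h1]
    simp only [bb, Matrix.add_kronecker, Matrix.kronecker_add]
    push_cast
    module
  · intro j
    rw [(hpsd j).1]
    fin_cases j
    · show Matrix.trace (Pop 0 * ydy 0) = 7 / 8
      rw [show ydy 0 = bell 0 ⊗ₖ bell 0 from rfl, pop0_eq]
      simp only [bb, add_mul, smul_mul_assoc, ← Matrix.mul_kronecker_mul, Matrix.trace_add,
        Matrix.trace_smul, Matrix.trace_kronecker, trace_bell_mul]
      simp
      try norm_num
    · show Matrix.trace (Pop 1 * ydy 1) = 7 / 8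
      rw [show ydy 1 = bell 1 ⊗ₖ bell 3 from rfl, pop1_eq]
      simp only [bb, add_mul, smul_mul_assoc, ← Matrix.mul_kronecker_mul, Matrix.trace_add,
        Matrix.trace_smul, Matrix.trace_kronecker, trace_bell_mul]
      simp
      try norm_num
    · show Matrix.trace (Pop 2 * ydy 2) = 7 / 8
      rw [show ydy 2 = bell 2 ⊗ₖ bell 3 from rfl, pop2_eq]
      simp only [bb, add_mul, smul_mul_assoc, ← Matrix.mul_kronecker_mul, Matrix.trace_add,
        Matrix.trace_smul, Matrix.trace_kronecker, trace_bell_mul]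
      simp
      try norm_num
    · show Matrix.trace (Pop 3 * ydy 3) = 7 / 8
      rw [show ydy 3 = bell 3 ⊗ₖ bell 3 from rfl, pop3_eq]
      simp only [bb, add_mul, smul_mul_assoc, ← Matrix.mul_kronecker_mul, Matrix.trace_add,
        Matrix.trace_smul, Matrix.trace_kronecker, trace_bell_mul]
      simp
      try norm_num
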